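/- Fix a positive integer l and set r = 2^l − 1 and σ_r = Σ_{i=r+1}^{2r+1} 1/i. Then for all integers i, s with 0 ≤ i ≤ l−1 and 0 ≤ s ≤ 2^i − 1, the quantity apx(i,s) = σ_r / ((2^i + s + 1) · Σ_{j = 2^l + 2^{l−i−1}(2s+1)}^{2^l − 1 + 2^{l−i−1}(2s+2)} 1/j) satisfies apx(i,s) ≤ (2 − 1/2^l) σ_r < 2σ_r. -/

import Mathlib

/-- σ_r = Σ_{i=r+1}^{2r+1} 1/i -/
noncomputable def sigma (r : ℕ) : ℝ := ∑ i ∈ Finset.Icc (r + 1) (2 * r + 1), (1 : ℝ) / i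

/-- apx(i,s) = σ_r / ((2^i+s+1) · Σ_{j=2^l+2^{l-i-1}(2s+1)}^{2^l-1+2^{l-i-1}(2s+2)} 1/j),
with r = 2^l - 1. -/
noncomputable def apx (l i s : ℕ) : ℝ :=
  sigma (2 ^ l - 1) /
    (((2 : ℝ) ^ i + s + 1) *
      ∑ j ∈ Finset.Icc (2 ^ l + 2 ^ (l - i - 1) * (2 * s + 1))
          (2 ^ l - 1 + 2 ^ (l - i - 1) * (2 * s + 2)), (1 : ℝ) / j)

lemma sigma_pos (r : ℕ) : 0 < sigma r := by
  unfold sigma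
  apply Finset.sum_pos
  · intro i hi
    rw [Finset.mem_Icc] at hi
    have : 0 < i := by omega
    positivity
  · exact ⟨r + 1, by rw [Finset.mem_Icc]; omega⟩

theorem apx_le (l : ℕ) (hl : 1 ≤ l) :
    ∀ i s : ℕ, i ≤ l - 1 → s ≤ 2 ^ i - 1 →
      apx l i s ≤ (2 - 1 / 2 ^ l) * sigma (2 ^ l - 1) ∧
        (2 - 1 / 2 ^ l) * sigma (2 ^ l - 1) < 2 * sigma (2 ^ l - 1) := by
  intro i s hi hs
  have hσ := sigma_pos (2 ^ l - 1)
  constructor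
  · unfold apx
    set k := l - i - 1 with hkdef
    have hk : k + (i + 1) = l := by omega
    have hml : 2 ^ k * 2 ^ (i + 1) = 2 ^ l := by rw [← pow_add, hk]
    set a := 2 ^ l + 2 ^ k * (2 * s + 1) with ha
    set b := 2 ^ l - 1 + 2 ^ k * (2 * s + 2) with hb
    have h2l1 : 1 ≤ 2 ^ l := Nat.one_le_two_pow
    have hmpos : 1 ≤ 2 ^ k := Nat.one_le_two_pow
    have hs' : s + 1 ≤ 2 ^ i := by
      have : 1 ≤ 2 ^ i := Nat.one_le_two_pow
      omega
    have e1 : 2 ^ k * (2 * s + 2) = 2 ^ k * (2 * s + 1) + 2 ^ k := by ring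
    have hab : a ≤ b := by omega
    have hbB : b + 1 ≤ 2 ^ (l + 1) := by
      have h1 : 2 ^ k * (2 * s + 2) ≤ 2 ^ l := by
        calc 2 ^ k * (2 * s + 2) = 2 ^ k * 2 * (s + 1) := by ring
          _ ≤ 2 ^ k * 2 * 2 ^ i := by gcongr
          _ = 2 ^ k * 2 ^ (i + 1) := by ring
          _ = 2 ^ l := hml
      have h2 : 2 ^ (l + 1) = 2 * 2 ^ l := by ring
      omega
    have hC_id : (2 ^ i + s + 1) * 2 ^ k * 2 = b + 1 := by
      have e2 : (2 ^ i + s + 1) * 2 ^ k * 2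
          = 2 ^ k * 2 ^ (i + 1) + 2 ^ k * (2 * s + 2) := by ring
      omega
    have hcard : (Finset.Icc a b).card = 2 ^ k := by
      rw [Nat.card_Icc]; omega
    -- pass to reals
    set C : ℝ := (2 : ℝ) ^ i + (s : ℝ) + 1 with hC
    set S : ℝ := ∑ j ∈ Finset.Icc a b, (1 : ℝ) / (j : ℝ) with hS
    have hb0 : (0 : ℝ) < (b : ℝ) := by
      have : 1 ≤ b := by omega
      exact_mod_cast Nat.lt_of_lt_of_le Nat.zero_lt_one this
    have hCpos : 0 < C := by positivity
    have hC_idR : C * ((2 : ℝ) ^ k) * 2 = (b : ℝ) + 1 := by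
      have := congrArg (Nat.cast : ℕ → ℝ) hC_id
      push_cast at this
      rw [hC]
      linarith [this]
    have hSlb : ((2 : ℝ) ^ k) / (b : ℝ) ≤ S := by
      have hterm : ∀ j ∈ Finset.Icc a b, (1 : ℝ) / (b : ℝ) ≤ 1 / (j : ℝ) := by
        intro j hj
        rw [Finset.mem_Icc] at hj
        have hj0 : (0 : ℝ) < (j : ℝ) := by
          have : 1 ≤ j := by omega
          exact_mod_cast Nat.lt_of_lt_of_le Nat.zero_lt_one this
        exact one_div_le_one_div_of_le hj0 (by exact_mod_cast hj.2)
      have h := Finset.card_nsmul_le_sum (Finset.Icc a b)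
        (fun j => (1 : ℝ) / (j : ℝ)) ((1 : ℝ) / (b : ℝ)) hterm
      rw [hcard, nsmul_eq_mul] at h
      calc ((2 : ℝ) ^ k) / (b : ℝ) = ((2 ^ k : ℕ) : ℝ) * (1 / (b : ℝ)) := by
            push_cast; ring
        _ ≤ S := h
    have hSpos : 0 < S := lt_of_lt_of_le (by positivity) hSlb
    have hCSlb : ((b : ℝ) + 1) / (2 * (b : ℝ)) ≤ C * S := by
      have heq : ((b : ℝ) + 1) / (2 * (b : ℝ)) = C * ((2 : ℝ) ^ k / (b : ℝ)) := by
        rw [← hC_idR]; field_simp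
      rw [heq]
      exact mul_le_mul_of_nonneg_left hSlb hCpos.le
    have hP : (0 : ℝ) < 2 ^ l := by positivity
    have hbBR : (b : ℝ) + 1 ≤ 2 * 2 ^ l := by
      have := (Nat.cast_le (α := ℝ)).mpr hbB
      push_cast at this
      calc (b : ℝ) + 1 ≤ (2 : ℝ) ^ (l + 1) := this
        _ = 2 * 2 ^ l := by ring
    have ht : 1 ≤ (2 - 1 / (2 : ℝ) ^ l) * (((b : ℝ) + 1) / (2 * (b : ℝ))) := by
      rw [mul_div_assoc', le_div_iff₀ (by positivity)]
      have hinv : (1 / (2 : ℝ) ^ l) * 2 ^ l = 1 := by field_simp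
      nlinarith [mul_le_mul_of_nonneg_right hbBR (le_of_lt (show (0:ℝ) < 1 / 2 ^ l by positivity))]
    have key : 1 ≤ (2 - 1 / (2 : ℝ) ^ l) * (C * S) := by
      have ht2 : (0 : ℝ) ≤ 2 - 1 / 2 ^ l := by
        have h1l : (1 : ℝ) ≤ 2 ^ l := by exact_mod_cast h2l1
        have : (1 : ℝ) / 2 ^ l ≤ 1 := by
          rw [div_le_one hP]; exact h1l
        linarith
      calc (1 : ℝ) ≤ (2 - 1 / (2 : ℝ) ^ l) * (((b : ℝ) + 1) / (2 * (b : ℝ))) := ht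
        _ ≤ (2 - 1 / (2 : ℝ) ^ l) * (C * S) := mul_le_mul_of_nonneg_left hCSlb ht2
    have hD : 0 < C * S := mul_pos hCpos hSpos
    rw [div_le_iff₀ hD]
    calc sigma (2 ^ l - 1) = sigma (2 ^ l - 1) * 1 := by ring
      _ ≤ sigma (2 ^ l - 1) * ((2 - 1 / (2 : ℝ) ^ l) * (C * S)) :=
          mul_le_mul_of_nonneg_left key hσ.le
      _ = (2 - 1 / 2 ^ l) * sigma (2 ^ l - 1) * (C * S) := by ring
  · have h2 : (0 : ℝ) < 1 / 2 ^ l := by positivity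
    nlinarith [hσ, h2]
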